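/- Let S be a finite family of finite sets and let k ≥ 1 and t ≥ 0 be such that every subfamily of S of size at most k has union of size at most t. Then for every integer ℓ ≥ k, every subfamily of S of size ℓ has union of size at most (ℓ·t)/k (as real numbers). -/

import Mathlib

/-- If every subfamily of `S` of size at most `k` has union of size at most `t`, then
every subfamily of size `ℓ ≥ k` has union of size at most `ℓ t / k`. -/
theorem union_card_le_of_small_k_covers {α : Type*} [DecidableEq α]
    (S : Finset (Finset α)) (k : ℕ) (t : ℝ) (hk : 1 ≤ k) (ht : 0 ≤ t)
    (hcov : ∀ D ⊆ S, D.card ≤ k → ((D.sup id).card : ℝ) ≤ t) :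
    ∀ ℓ : ℕ, k ≤ ℓ → ∀ D ⊆ S, D.card = ℓ →
      ((D.sup id).card : ℝ) ≤ ((ℓ : ℝ) * t) / (k : ℝ) := by
  have hk0 : (0:ℝ) < (k:ℝ) := by exact_mod_cast hk
  intro ℓ hℓ
  induction ℓ, hℓ using Nat.le_induction with
  | base =>
    intro D hDS hcard
    have h1 := hcov D hDS (le_of_eq hcard)
    have h2 : (k:ℝ) * t / (k:ℝ) = t := by field_simp
    linarith
  | succ n hn IH =>
    intro D hDS hcard
    -- f A : elements covered only by A
    set U : Finset α := D.sup id with hU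
    have hsub : ∀ A, (D.erase A).sup id ⊆ U :=
      fun A => Finset.sup_mono (Finset.erase_subset A D)
    -- disjointness of the "unique" parts
    have hdisj : (D : Set (Finset α)).PairwiseDisjoint
        (fun A => U \ (D.erase A).sup id) := by
      intro A hA B hB hAB
      refine Finset.disjoint_left.2 ?_
      intro x hxA hxB
      simp only [Finset.mem_sdiff] at hxA hxB
      obtain ⟨hxU, hxA'⟩ := hxA
      obtain ⟨_, hxB'⟩ := hxB
      obtain ⟨C, hC, hxC⟩ := Finset.mem_sup.1 hxU
      rcases eq_or_ne C A with rfl | hCA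
      · exact hxB' (Finset.mem_sup.2 ⟨C, Finset.mem_erase.2 ⟨hAB, hC⟩, hxC⟩)
      · exact hxA' (Finset.mem_sup.2 ⟨C, Finset.mem_erase.2 ⟨hCA, hC⟩, hxC⟩)
    have hsum : ∑ A ∈ D, (U \ (D.erase A).sup id).card ≤ U.card := by
      rw [← Finset.card_biUnion (fun A hA B hB hAB => hdisj hA hB hAB)]
      apply Finset.card_le_card
      intro x hx
      obtain ⟨A, hA, hxA⟩ := Finset.mem_biUnion.1 hx
      exact (Finset.mem_sdiff.1 hxA).1
    -- average: some A with small unique part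
    have hDne : D.Nonempty := by
      rw [← Finset.card_pos, hcard]; omega
    have hn1 : (0:ℝ) < ((n:ℝ)+1) := by positivity
    have hex : ∃ A ∈ D, ((U \ (D.erase A).sup id).card : ℝ) ≤ (U.card : ℝ) / ((n:ℝ)+1) := by
      by_contra h
      push_neg at h
      have : (U.card : ℝ) < ∑ A ∈ D, ((U \ (D.erase A).sup id).card : ℝ) := by
        calc (U.card : ℝ) = ∑ A ∈ D, (U.card : ℝ) / ((n:ℝ)+1) := by
              rw [Finset.sum_const, hcard]
              rw [nsmul_eq_mul]
              push_cast
              field_simp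
          _ < _ := Finset.sum_lt_sum_of_nonempty hDne (fun A hA => h A hA)
      have h2 : (∑ A ∈ D, ((U \ (D.erase A).sup id).card : ℝ)) ≤ (U.card : ℝ) := by
        exact_mod_cast hsum
      linarith
    obtain ⟨A, hA, hAle⟩ := hex
    -- decompose U
    have hsplit : (U.card : ℝ) =
        (((D.erase A).sup id).card : ℝ) + ((U \ (D.erase A).sup id).card : ℝ) := by
      have := Finset.card_sdiff_add_card_eq_card (hsub A)
      push_cast [← this]
      ring
    have hIH : ((((D.erase A).sup id).card : ℝ)) ≤ ((n:ℝ) * t) / (k:ℝ) := by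
      apply IH (D.erase A) ((Finset.erase_subset A D).trans hDS)
      rw [Finset.card_erase_of_mem hA, hcard]
      omega
    -- combine
    have hkn : (k:ℝ) ≤ (n:ℝ) := by exact_mod_cast hn
    have hn0 : (0:ℝ) < (n:ℝ) := lt_of_lt_of_le hk0 hkn
    have key : (U.card : ℝ) ≤ (n:ℝ) * t / (k:ℝ) + (U.card : ℝ) / ((n:ℝ)+1) :=
      by linarith [hsplit, hIH, hAle]
    rw [div_add_div _ _ (ne_of_gt hk0) (ne_of_gt hn1),
      le_div_iff₀ (mul_pos hk0 hn1)] at key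
    push_cast
    rw [le_div_iff₀ hk0]
    nlinarith [key, hn0]
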